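/- Let p ∈ (0,1), A ∈ (0,1), B > 1, and let k be an integer with p·Bᵏ > 1 + (1-p)·Aᵏ, i.e. ρ := (1 + (1-p)Aᵏ)/(p·Bᵏ) < 1. Consider the space 𝔉 of continuous functions ζ: (0,∞) → ℝ with ∫₀^∞ |ζ(s)|/s^{k+1} ds < ∞, with metric d(ζ₁,ζ₂) = ∫₀^∞ |ζ₁(s) - ζ₂(s)|/s^{k+1} ds. Then the operator 𝒜(ζ)(s) = (1/p)·(ζ(s/B) - (1-p)·ζ(sA/B)) maps 𝔉 to 𝔉 and satisfies d(𝒜(ζ₁), 𝒜(ζ₂)) ≤ ρ·d(ζ₁,ζ₂) for all ζ₁, ζ₂ ∈ 𝔉; in particular 𝒜 is a contraction. -/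

import Mathlib

open MeasureTheory Set

lemma scale_aux (k : ℕ) (f : ℝ → ℝ)
    (hf : IntegrableOn (fun s => |f s| / s ^ (k + 1)) (Ioi 0)) (a : ℝ) (ha : 0 < a) :
    IntegrableOn (fun s => |f (a * s)| / s ^ (k + 1)) (Ioi 0) ∧
    (∫ s in Ioi (0:ℝ), |f (a * s)| / s ^ (k + 1))
      = a ^ k * ∫ s in Ioi (0:ℝ), |f s| / s ^ (k + 1) := by
  set h : ℝ → ℝ := fun s => |f s| / s ^ (k + 1) with hh
  have key : EqOn (fun s => |f (a * s)| / s ^ (k + 1))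
      (fun s => a ^ (k+1) * h (a * s)) (Ioi 0) := by
    intro s hs
    have hs0 : (0:ℝ) < s := hs
    simp only [hh, mul_pow]
    field_simp
  have hcomp : IntegrableOn (fun s => h (a * s)) (Ioi 0) := by
    rw [integrableOn_Ioi_comp_mul_left_iff h 0 ha, mul_zero]
    exact hf
  constructor
  · exact IntegrableOn.congr_fun (hcomp.const_mul (a ^ (k+1))) key.symm measurableSet_Ioi
  · rw [setIntegral_congr_fun measurableSet_Ioi key, integral_const_mul,
      integral_comp_mul_left_Ioi h 0 ha, mul_zero]
    simp only [smul_eq_mul]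
    rw [← mul_assoc, pow_succ]
    field_simp

theorem stmt_8 (p A B ρ : ℝ) (k : ℕ) (hp : p ∈ Set.Ioo (0:ℝ) 1) (hA : A ∈ Set.Ioo (0:ℝ) 1)
    (hB : 1 < B) (hρ : ρ = (1 + (1 - p) * A ^ k) / (p * B ^ k)) (hρ1 : ρ < 1)
    (ζ₁ ζ₂ : ℝ → ℝ) (hc₁ : ContinuousOn ζ₁ (Ioi 0)) (hc₂ : ContinuousOn ζ₂ (Ioi 0))
    (hi₁ : IntegrableOn (fun s => |ζ₁ s| / s ^ (k + 1)) (Ioi 0))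
    (hi₂ : IntegrableOn (fun s => |ζ₂ s| / s ^ (k + 1)) (Ioi 0))
    (𝒜 : (ℝ → ℝ) → ℝ → ℝ)
    (h𝒜 : ∀ ζ : ℝ → ℝ, ∀ s : ℝ, 𝒜 ζ s = (1 / p) * (ζ (s / B) - (1 - p) * ζ (s * A / B))) :
    IntegrableOn (fun s => |𝒜 ζ₁ s| / s ^ (k + 1)) (Ioi 0) ∧
    IntegrableOn (fun s => |𝒜 ζ₂ s| / s ^ (k + 1)) (Ioi 0) ∧
    (∫ s in Ioi (0:ℝ), |𝒜 ζ₁ s - 𝒜 ζ₂ s| / s ^ (k + 1)) ≤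
      ρ * ∫ s in Ioi (0:ℝ), |ζ₁ s - ζ₂ s| / s ^ (k + 1) := by
  obtain ⟨hp0, hp1⟩ := hp
  obtain ⟨hA0, hA1⟩ := hA
  have hB0 : (0:ℝ) < B := lt_trans one_pos hB
  -- the key general estimate
  have key : ∀ ζ : ℝ → ℝ, ContinuousOn ζ (Ioi 0) →
      IntegrableOn (fun s => |ζ s| / s ^ (k + 1)) (Ioi 0) →
      IntegrableOn (fun s => |(1/p) * (ζ (s / B) - (1-p) * ζ (s * A / B))| / s ^ (k + 1)) (Ioi 0) ∧
      (∫ s in Ioi (0:ℝ), |(1/p) * (ζ (s / B) - (1-p) * ζ (s * A / B))| / s ^ (k + 1)) ≤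
        ρ * ∫ s in Ioi (0:ℝ), |ζ s| / s ^ (k + 1) := by
    intro ζ hc hi
    obtain ⟨h1i, h1e⟩ := scale_aux k ζ hi B⁻¹ (by positivity)
    obtain ⟨h2i, h2e⟩ := scale_aux k ζ hi (A/B) (by positivity)
    set g : ℝ → ℝ := fun s =>
      (1/p) * (|ζ (B⁻¹ * s)| / s ^ (k+1) + (1-p) * (|ζ (A/B * s)| / s ^ (k+1))) with hg
    have hgi : IntegrableOn g (Ioi 0) :=
      (h1i.add (h2i.const_mul (1-p))).const_mul (1/p)
    have hbound : ∀ s ∈ Ioi (0:ℝ),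
        |(1/p) * (ζ (s / B) - (1-p) * ζ (s * A / B))| / s ^ (k + 1) ≤ g s := by
      intro s hs
      have hs0 : (0:ℝ) < s := hs
      have e1 : s / B = B⁻¹ * s := by ring
      have e2 : s * A / B = A/B * s := by ring
      have habs : |(1/p) * (ζ (s / B) - (1-p) * ζ (s * A / B))|
          ≤ (1/p) * (|ζ (B⁻¹ * s)| + (1-p) * |ζ (A/B * s)|) := by
        rw [abs_mul, abs_of_pos (by positivity : (0:ℝ) < 1/p), e1, e2]
        gcongr
        calc |ζ (B⁻¹ * s) - (1-p) * ζ (A/B * s)|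
            ≤ |ζ (B⁻¹ * s)| + |(1-p) * ζ (A/B * s)| := abs_sub _ _
          _ = |ζ (B⁻¹ * s)| + (1-p) * |ζ (A/B * s)| := by
              rw [abs_mul, abs_of_nonneg (by linarith : (0:ℝ) ≤ 1-p)]
      calc |(1/p) * (ζ (s / B) - (1-p) * ζ (s * A / B))| / s ^ (k + 1)
          ≤ ((1/p) * (|ζ (B⁻¹ * s)| + (1-p) * |ζ (A/B * s)|)) / s ^ (k + 1) := by
            gcongr
        _ = g s := by simp only [hg]; ring
    have hm : AEStronglyMeasurable
        (fun s => |(1/p) * (ζ (s / B) - (1-p) * ζ (s * A / B))| / s ^ (k + 1))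
        (volume.restrict (Ioi 0)) := by
      refine ContinuousOn.aestronglyMeasurable ?_ measurableSet_Ioi
      refine ContinuousOn.div ?_ (continuous_pow _).continuousOn
        (fun s hs => (pow_pos hs _).ne')
      refine ContinuousOn.abs (continuousOn_const.mul (ContinuousOn.sub ?_
        (continuousOn_const.mul ?_)))
      · exact hc.comp (continuousOn_id.div_const B)
          (fun s hs => by simpa using div_pos hs hB0)
      · exact hc.comp ((continuousOn_id.mul continuousOn_const).div_const B)
          (fun s hs => by simpa using div_pos (mul_pos hs hA0) hB0)
    have hint : IntegrableOn
        (fun s => |(1/p) * (ζ (s / B) - (1-p) * ζ (s * A / B))| / s ^ (k + 1)) (Ioi 0) := by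
      refine Integrable.mono' hgi hm ?_
      filter_upwards [ae_restrict_mem measurableSet_Ioi] with s hs
      have hs0 : (0:ℝ) < s := hs
      rw [Real.norm_eq_abs, abs_of_nonneg (by positivity)]
      exact hbound s hs
    refine ⟨hint, ?_⟩
    calc (∫ s in Ioi (0:ℝ), |(1/p) * (ζ (s / B) - (1-p) * ζ (s * A / B))| / s ^ (k + 1))
        ≤ ∫ s in Ioi (0:ℝ), g s :=
          setIntegral_mono_on hint hgi measurableSet_Ioi hbound
      _ = (1/p) * ((B⁻¹)^k * (∫ s in Ioi (0:ℝ), |ζ s| / s ^ (k+1))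
            + (1-p) * ((A/B)^k * ∫ s in Ioi (0:ℝ), |ζ s| / s ^ (k+1))) := by
          simp only [hg]
          rw [integral_const_mul, integral_add h1i (h2i.const_mul (1-p)),
            integral_const_mul, h1e, h2e]
      _ = ρ * ∫ s in Ioi (0:ℝ), |ζ s| / s ^ (k+1) := by
          rw [hρ, div_pow, inv_pow]
          have : (B:ℝ)^k ≠ 0 := by positivity
          field_simp
  refine ⟨?_, ?_, ?_⟩
  · simp_rw [h𝒜]; exact (key ζ₁ hc₁ hi₁).1
  · simp_rw [h𝒜]; exact (key ζ₂ hc₂ hi₂).1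
  · have hδc : ContinuousOn (fun s => ζ₁ s - ζ₂ s) (Ioi 0) := hc₁.sub hc₂
    have hδm : AEStronglyMeasurable (fun s => |ζ₁ s - ζ₂ s| / s ^ (k+1))
        (volume.restrict (Ioi 0)) :=
      (hδc.abs.div (continuous_pow _).continuousOn
        (fun s hs => (pow_pos hs _).ne')).aestronglyMeasurable measurableSet_Ioi
    have hδi : IntegrableOn (fun s => |ζ₁ s - ζ₂ s| / s ^ (k+1)) (Ioi 0) := by
      refine Integrable.mono' (hi₁.add hi₂) hδm ?_
      filter_upwards [ae_restrict_mem measurableSet_Ioi] with s hs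
      have hs0 : (0:ℝ) < s := hs
      rw [Real.norm_eq_abs, abs_of_nonneg (by positivity)]
      calc |ζ₁ s - ζ₂ s| / s ^ (k+1) ≤ (|ζ₁ s| + |ζ₂ s|) / s ^ (k+1) := by
            gcongr
            exact abs_sub _ _
        _ = |ζ₁ s| / s ^ (k+1) + |ζ₂ s| / s ^ (k+1) := add_div _ _ _
    have heq : (fun s => |𝒜 ζ₁ s - 𝒜 ζ₂ s| / s ^ (k + 1))
        = fun s => |(1/p) * ((fun t => ζ₁ t - ζ₂ t) (s / B)
            - (1-p) * (fun t => ζ₁ t - ζ₂ t) (s * A / B))| / s ^ (k + 1) := by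
      funext s
      rw [h𝒜, h𝒜]
      ring_nf
    rw [heq]
    exact (key (fun s => ζ₁ s - ζ₂ s) hδc hδi).2
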